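/- For every set Γ, the Banach space C([-1,1]^Γ) has the separable complementation property: for every separable closed subspace G of C([-1,1]^Γ) there exists a separable complemented closed subspace G₀ of C([-1,1]^Γ) containing G, and moreover G₀ is isometrically isomorphic to C([-1,1]^A) for some countable A ⊂ Γ. -/

import Mathlib

open Set TopologicalSpace
open scoped Classical

namespace Stmt5Aux

variable {Γ : Type*}

local notation "X" => (Γ → Set.Icc (-1:ℝ) 1)

lemma exists_finset (f : C((Γ → Set.Icc (-1:ℝ) 1), ℝ)) {ε : ℝ} (hε : 0 < ε) :
    ∃ F : Finset Γ, ∀ x y : Γ → Set.Icc (-1:ℝ) 1,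
      (∀ a ∈ F, x a = y a) → |f x - f y| < ε := by
  classical
  have h : ∀ x : Γ → Set.Icc (-1:ℝ) 1, ∃ (F : Finset Γ)
      (u : ∀ _ : Γ, Set (Set.Icc (-1:ℝ) 1)),
      (∀ a ∈ F, IsOpen (u a) ∧ x a ∈ u a) ∧
      (F : Set Γ).pi u ⊆ f ⁻¹' Metric.ball (f x) (ε/2) := by
    intro x
    have hopen : IsOpen (f ⁻¹' Metric.ball (f x) (ε/2)) :=
      Metric.isOpen_ball.preimage f.continuous
    have hx : x ∈ f ⁻¹' Metric.ball (f x) (ε/2) := by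
      simp [Metric.mem_ball, half_pos hε]
    exact isOpen_pi_iff.mp hopen x hx
  choose F u hu hsub using h
  have hcover : (Set.univ : Set (Γ → Set.Icc (-1:ℝ) 1)) ⊆
      ⋃ x, (F x : Set Γ).pi (u x) :=
    fun x _ => Set.mem_iUnion.mpr ⟨x, fun a ha => (hu x a ha).2⟩
  obtain ⟨t, ht⟩ := isCompact_univ.elim_finite_subcover _
    (fun x => isOpen_set_pi (F x).finite_toSet fun a ha => (hu x a ha).1) hcover
  refine ⟨t.biUnion F, fun x y hxy => ?_⟩
  obtain ⟨z, hz, hxz⟩ : ∃ z ∈ t, x ∈ (F z : Set Γ).pi (u z) := by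
    have := ht (Set.mem_univ x)
    simpa using this
  have hyz : y ∈ (F z : Set Γ).pi (u z) := by
    intro a ha
    rw [← hxy a (Finset.mem_biUnion.mpr ⟨z, hz, ha⟩)]
    exact hxz a ha
  have h1 : |f x - f z| < ε/2 := by simpa [Real.dist_eq] using hsub z hxz
  have h2 : |f y - f z| < ε/2 := by simpa [Real.dist_eq] using hsub z hyz
  have h2' : |f z - f y| < ε/2 := by rwa [abs_sub_comm]
  calc |f x - f y| ≤ |f x - f z| + |f z - f y| := abs_sub_le _ (f z) _
    _ < ε/2 + ε/2 := add_lt_add h1 h2'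
    _ = ε := add_halves ε

lemma exists_countable_dep (f : C((Γ → Set.Icc (-1:ℝ) 1), ℝ)) :
    ∃ A : Set Γ, A.Countable ∧ ∀ x y : Γ → Set.Icc (-1:ℝ) 1,
      (∀ a ∈ A, x a = y a) → f x = f y := by
  have h : ∀ n : ℕ, ∃ F : Finset Γ, ∀ x y : Γ → Set.Icc (-1:ℝ) 1,
      (∀ a ∈ F, x a = y a) → |f x - f y| < 1/(n+1) :=
    fun n => exists_finset f (by positivity)
  choose F hF using h
  refine ⟨⋃ n, (F n : Set Γ), Set.countable_iUnion fun n => (F n).countable_toSet,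
    fun x y hxy => ?_⟩
  by_contra hne
  have hpos : 0 < |f x - f y| := abs_pos.mpr (sub_ne_zero.mpr hne)
  obtain ⟨n, hn⟩ := exists_nat_one_div_lt hpos
  exact absurd (hF n x y fun a ha => hxy a (Set.mem_iUnion.mpr ⟨n, ha⟩)) (by linarith)


noncomputable section

variable (A : Set Γ)

/-- The point `0` of the interval. -/
def z0 : Set.Icc (-1:ℝ) 1 := ⟨0, by norm_num⟩

/-- Restriction map. -/
def ρ : C((Γ → Set.Icc (-1:ℝ) 1), (↥A → Set.Icc (-1:ℝ) 1)) :=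
  ⟨fun x a => x a, continuous_pi fun a => continuous_apply _⟩

/-- Extension by `0`. -/
def eA : C((↥A → Set.Icc (-1:ℝ) 1), (Γ → Set.Icc (-1:ℝ) 1)) :=
  ⟨fun y a => if h : a ∈ A then y ⟨a, h⟩ else z0, by
    refine continuous_pi fun a => ?_
    by_cases h : a ∈ A
    · simpa [h] using (continuous_apply (⟨a, h⟩ : A))
    · simpa [h] using (continuous_const : Continuous fun _ : (↥A → _) => z0)⟩

lemma rho_comp_eA : (ρ A).comp (eA A) = ContinuousMap.id _ := by
  ext y a
  simp [ρ, eA, a.2]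

/-- The retraction. -/
def rA : C((Γ → Set.Icc (-1:ℝ) 1), (Γ → Set.Icc (-1:ℝ) 1)) := (eA A).comp (ρ A)

lemma rA_idem : (rA A).comp (rA A) = rA A := by
  rw [rA, ContinuousMap.comp_assoc, ← ContinuousMap.comp_assoc (ρ A), rho_comp_eA,
    ContinuousMap.id_comp]

lemma rA_agree (x : Γ → Set.Icc (-1:ℝ) 1) (a : Γ) (ha : a ∈ A) : rA A x a = x a := by
  simp [rA, eA, ρ, ha]

/-- The projection operator: precomposition with `rA`. -/
def PA : C((Γ → Set.Icc (-1:ℝ) 1), ℝ) →L[ℝ] C((Γ → Set.Icc (-1:ℝ) 1), ℝ) :=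
  { toFun := fun g => g.comp (rA A)
    map_add' := fun _ _ => ContinuousMap.ext fun _ => rfl
    map_smul' := fun _ _ => ContinuousMap.ext fun _ => rfl
    cont := ContinuousMap.continuous_precomp (rA A) }

lemma PA_apply (g : C((Γ → Set.Icc (-1:ℝ) 1), ℝ)) : PA A g = g.comp (rA A) := rfl

/-- The candidate complemented subspace. -/
def G0 : Submodule ℝ C((Γ → Set.Icc (-1:ℝ) 1), ℝ) :=
  LinearMap.ker ((ContinuousLinearMap.id ℝ C((Γ → Set.Icc (-1:ℝ) 1), ℝ) - PA A :
    C((Γ → Set.Icc (-1:ℝ) 1), ℝ) →L[ℝ] C((Γ → Set.Icc (-1:ℝ) 1), ℝ)) :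
    C((Γ → Set.Icc (-1:ℝ) 1), ℝ) →ₗ[ℝ] C((Γ → Set.Icc (-1:ℝ) 1), ℝ))

lemma mem_G0 (g : C((Γ → Set.Icc (-1:ℝ) 1), ℝ)) :
    g ∈ G0 A ↔ g.comp (rA A) = g := by
  rw [G0, LinearMap.mem_ker]
  constructor
  · intro h
    have : g - g.comp (rA A) = 0 := h
    rw [sub_eq_zero] at this
    exact this.symm
  · intro h
    show g - g.comp (rA A) = 0
    rw [h, sub_self]

lemma isClosed_G0 : IsClosed ((G0 A : Set C((Γ → Set.Icc (-1:ℝ) 1), ℝ))) :=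
  ContinuousLinearMap.isClosed_ker _

lemma mem_G0_of_dep (g : C((Γ → Set.Icc (-1:ℝ) 1), ℝ))
    (h : ∀ x y : Γ → Set.Icc (-1:ℝ) 1, (∀ a ∈ A, x a = y a) → g x = g y) :
    g ∈ G0 A := by
  rw [mem_G0]
  ext x
  exact h (rA A x) x fun a ha => rA_agree A x a ha

lemma closedComplemented_G0 : (G0 A).ClosedComplemented := by
  have hmaps : ∀ g, PA A g ∈ G0 A := by
    intro g
    rw [mem_G0, PA_apply, ContinuousMap.comp_assoc, rA_idem]
  refine ⟨(PA A).codRestrict (G0 A) hmaps, fun x => ?_⟩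
  ext1
  show PA A (x : C((Γ → Set.Icc (-1:ℝ) 1), ℝ)) = x
  exact (mem_G0 A _).mp x.2

lemma rho_comp_rA : (ρ A).comp (rA A) = ρ A := by
  rw [rA, ← ContinuousMap.comp_assoc, rho_comp_eA, ContinuousMap.id_comp]

/-- The isometric isomorphism between `G0 A` and `C([-1,1]^A)`. -/
def equivG0 : (G0 A) ≃ₗᵢ[ℝ] C((↥A → Set.Icc (-1:ℝ) 1), ℝ) where
  toLinearEquiv :=
  { toFun := fun g => (g : C((Γ → Set.Icc (-1:ℝ) 1), ℝ)).comp (eA A)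
    map_add' := fun _ _ => ContinuousMap.ext fun _ => rfl
    map_smul' := fun _ _ => ContinuousMap.ext fun _ => rfl
    invFun := fun h => ⟨h.comp (ρ A), by
      rw [mem_G0, ContinuousMap.comp_assoc, rho_comp_rA]⟩
    left_inv := fun g => by
      ext1
      show (((g : C((Γ → Set.Icc (-1:ℝ) 1), ℝ)).comp (eA A)).comp (ρ A)) = _
      rw [ContinuousMap.comp_assoc, ← rA]
      exact (mem_G0 A _).mp g.2
    right_inv := fun h => by
      show ((h.comp (ρ A)).comp (eA A)) = h
      rw [ContinuousMap.comp_assoc, rho_comp_eA, ContinuousMap.comp_id] }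
  norm_map' := by
    intro g
    show ‖(g : C((Γ → Set.Icc (-1:ℝ) 1), ℝ)).comp (eA A)‖ = ‖(g : C((Γ → Set.Icc (-1:ℝ) 1), ℝ))‖
    refine le_antisymm ?_ ?_
    · exact (ContinuousMap.norm_le _ (norm_nonneg _)).mpr fun y =>
        ContinuousMap.norm_coe_le_norm _ (eA A y)
    · have hg : ((g : C((Γ → Set.Icc (-1:ℝ) 1), ℝ)).comp (eA A)).comp (ρ A)
          = (g : C((Γ → Set.Icc (-1:ℝ) 1), ℝ)) := by
        rw [ContinuousMap.comp_assoc, ← rA]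
        exact (mem_G0 A _).mp g.2
      conv_lhs => rw [← hg]
      refine (ContinuousMap.norm_le _ (norm_nonneg _)).mpr fun x => ?_
      exact ContinuousMap.norm_coe_le_norm
        ((g : C((Γ → Set.Icc (-1:ℝ) 1), ℝ)).comp (eA A)) (ρ A x)

set_option synthInstance.maxHeartbeats 1000000 in
lemma separable_G0 (hA : A.Countable) :
    TopologicalSpace.SeparableSpace (G0 A) := by
  haveI := hA.to_subtype
  haveI : TopologicalSpace.SeparableSpace C((↥A → Set.Icc (-1:ℝ) 1), ℝ) := inferInstance
  exact ((equivG0 A).symm.toHomeomorph.surjective.denseRange).separableSpace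
    (equivG0 A).symm.continuous

end

end Stmt5Aux

open Stmt5Aux

/-- `C([-1,1]^Γ)` has the separable complementation property: every separable
closed subspace `G` is contained in a separable closed complemented subspace `G₀`, which is
moreover isometrically isomorphic to `C([-1,1]^A)` for some countable `A ⊆ Γ`. -/
theorem stmt5 {Γ : Type*}
    (G : Submodule ℝ C((Γ → Set.Icc (-1:ℝ) 1), ℝ))
    (hGc : IsClosed (G : Set C((Γ → Set.Icc (-1:ℝ) 1), ℝ)))
    (hGsep : TopologicalSpace.SeparableSpace G) :
    ∃ G₀ : Submodule ℝ C((Γ → Set.Icc (-1:ℝ) 1), ℝ),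
      G ≤ G₀ ∧
      IsClosed (G₀ : Set C((Γ → Set.Icc (-1:ℝ) 1), ℝ)) ∧
      TopologicalSpace.SeparableSpace G₀ ∧
      G₀.ClosedComplemented ∧
      ∃ A : Set Γ, A.Countable ∧
        Nonempty (G₀ ≃ₗᵢ[ℝ] C((A → Set.Icc (-1:ℝ) 1), ℝ)) := by
  classical
  obtain ⟨s, hsc, hsd⟩ :=
    TopologicalSpace.exists_countable_dense (G : Submodule ℝ C((Γ → Set.Icc (-1:ℝ) 1), ℝ))
  -- for each element of s, a countable coordinate set
  have hdep := fun g : (G : Submodule ℝ C((Γ → Set.Icc (-1:ℝ) 1), ℝ)) =>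
    Stmt5Aux.exists_countable_dep (g : C((Γ → Set.Icc (-1:ℝ) 1), ℝ))
  choose B hBc hBdep using hdep
  set A : Set Γ := ⋃ g ∈ s, B g with hA
  have hAc : A.Countable := hsc.biUnion fun g _ => hBc g
  refine ⟨G0 A, ?_, isClosed_G0 A, separable_G0 A hAc, closedComplemented_G0 A,
    A, hAc, ⟨equivG0 A⟩⟩
  -- G ≤ G0 A
  intro g hg
  have hsub : Subtype.val '' s ⊆ (G0 A : Set C((Γ → Set.Icc (-1:ℝ) 1), ℝ)) := by
    rintro - ⟨h, hhs, rfl⟩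
    exact mem_G0_of_dep A _ fun x y hxy =>
      hBdep h x y fun a ha => hxy a (Set.mem_biUnion hhs ha)
  have hcl : g ∈ closure (Subtype.val '' s) := by
    have h1 : (⟨g, hg⟩ : G) ∈ closure s := hsd.closure_eq ▸ Set.mem_univ _
    have := image_closure_subset_closure_image
      (continuous_subtype_val : Continuous (Subtype.val : G → _))
      (s := s)
    exact this ⟨_, h1, rfl⟩
  exact (isClosed_G0 A).closure_subset_iff.mpr hsub hcl
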